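/- arXiv:2107.03898 — 2 statements merged into one kernel-verified Lean document; each statement's English description precedes it below -/
import Mathlib

section
/- Let G be an n-player, m-action game and let G' = g_G(L) be the induced population game with L·n players, where each player v^i_ℓ for ℓ ∈ [L] receives the payoff that player i would receive in G when playing v^i_ℓ's strategy against the population averages of the other n−1 groups. If a' is an ε-approximate pure Nash equilibrium of G', then the mixed profile p* of G in which each player i plays the average (empirical distribution) of the actions of population i is an ε-well-supported Nash equilibrium of G. -/
open Finset

noncomputable section

def pureStrat {m : ℕ} (j : Fin m) : Fin m → ℝ := fun j' => if j' = j then 1 else 0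

def expPay {n m : ℕ} (u : (Fin n → Fin m) → ℝ) (p : Fin n → Fin m → ℝ) : ℝ :=
  ∑ a : Fin n → Fin m, (∏ i, p i (a i)) * u a

def dev {n m : ℕ} (p : Fin n → Fin m → ℝ) (i : Fin n) (j : Fin m) : Fin n → Fin m → ℝ :=
  Function.update p i (pureStrat j)

/-- The empirical (average) mixed strategy of population `i` under the pure profile `a'`
    of the population game. -/
def emp {n L m : ℕ} (a' : Fin n × Fin L → Fin m) : Fin n → Fin m → ℝ :=
  fun i j => ((univ.filter fun ℓ : Fin L => a' (i, ℓ) = j).card : ℝ) / L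

/-- Payoff to player `v = (i,ℓ)` of the induced population game `g_G(L)`: player `i`'s payoff
    in `G` when playing `v`'s action against the population averages of the other groups. -/
def popPay {n L m : ℕ} (u : Fin n → (Fin n → Fin m) → ℝ) (v : Fin n × Fin L)
    (a' : Fin n × Fin L → Fin m) : ℝ :=
  expPay (u v.1) (Function.update (emp a') v.1 (pureStrat (a' v)))

/-- If `a'` is an ε-approximate pure Nash equilibrium of the induced population game
    `g_G(L)`, then the profile where each player of `G` plays the empirical distribution of
    its population is an ε-well-supported Nash equilibrium of `G`. -/
theorem population_PNE_gives_WSNE (n L m : ℕ) (hL : 0 < L) (ε : ℝ)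
    (u : Fin n → (Fin n → Fin m) → ℝ) (a' : Fin n × Fin L → Fin m)
    (hPNE : ∀ (v : Fin n × Fin L) (j : Fin m),
      popPay u v (Function.update a' v j) - popPay u v a' ≤ ε) :
    ∀ (i : Fin n) (j : Fin m), 0 < emp a' i j →
      ∀ j' : Fin m, expPay (u i) (dev (emp a') i j') - expPay (u i) (dev (emp a') i j) ≤ ε := by

  intro i j hpos j'
  have hex : ∃ ℓ : Fin L, a' (i, ℓ) = j := by
    by_contra h
    push_neg at h
    have : (univ.filter fun ℓ : Fin L => a' (i, ℓ) = j) = ∅ :=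
      Finset.filter_eq_empty_iff.mpr (by intro ℓ _; exact h ℓ)
    simp [emp, this] at hpos
  obtain ⟨ℓ, hℓ⟩ := hex
  have key := hPNE (i, ℓ) j'
  have h1 : popPay u (i, ℓ) a' = expPay (u i) (dev (emp a') i j) := by
    simp [popPay, dev, hℓ]
  have hempeq : ∀ i' : Fin n, i' ≠ i →
      emp (Function.update a' (i, ℓ) j') i' = emp a' i' := by
    intro i' hi
    funext jj
    unfold emp
    congr 2
    congr 1
    apply Finset.filter_congr
    intro ℓ' _
    have : (i', ℓ') ≠ (i, ℓ) := by
      intro he; exact hi (congrArg Prod.fst he)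
    rw [Function.update_of_ne this]
  have h2 : popPay u (i, ℓ) (Function.update a' (i, ℓ) j')
      = expPay (u i) (dev (emp a') i j') := by
    unfold popPay dev
    simp only [Function.update_self]
    congr 1
    funext i'
    by_cases hi : i' = i
    · subst hi; simp
    · rw [Function.update_of_ne hi, Function.update_of_ne hi, hempeq i' hi]
  rw [← h1, ← h2]
  exact key
end
end

section
/- Let X be a joint distribution over action profiles of the 2-player, m-action generalized Matching Pennies game (player 1 wants to match, player 2 wants to mismatch), let α > 0, ε = (m−1)/m − α, and ρ = ((2−α)m − 1)/(2m). If for some action j, Pr_{(a₁,a₂)∼X}(a₁ = j, a₂ = j) > ρ, then player 2 has a constant deviation φ with reg₂^{(φ)}(X) > ε; hence X is not an ε-approximate correlated equilibrium. -/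
open Finset

noncomputable section

/-- Player 1's payoff in the 2-player generalized Matching Pennies game: 1 iff the actions match. -/
def u1 {m : ℕ} (a : Fin m × Fin m) : ℝ := if a.1 = a.2 then 1 else 0

/-- Player 2's payoff: 1 iff the actions differ. -/
def u2 {m : ℕ} (a : Fin m × Fin m) : ℝ := if a.1 = a.2 then 0 else 1

/-- If a correlated strategy of the 2-player generalized Matching Pennies game places
    probability more than ρ = ((2−α)m−1)/(2m) on some matched pair (j,j), then player 2 has a
    constant deviation with regret exceeding ε = (m−1)/m − α; hence X is not an
    ε-approximate correlated equilibrium. -/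
theorem matched_pair_breaks_ACE (m : ℕ) (hm : 2 ≤ m) (α ε ρ : ℝ) (hα : 0 < α)
    (hε : ε = ((m : ℝ) - 1) / m - α) (hρ : ρ = ((2 - α) * m - 1) / (2 * m))
    (X : Fin m × Fin m → ℝ) (hX0 : ∀ a, 0 ≤ X a) (hX1 : ∑ a : Fin m × Fin m, X a = 1)
    (j : Fin m) (hj : ρ < X (j, j)) :
    (∃ j' : Fin m,
      (∑ a : Fin m × Fin m, X a * u2 (a.1, j')) - (∑ a : Fin m × Fin m, X a * u2 a) > ε) ∧
    ¬ (∀ φ : Fin m → Fin m,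
      (∑ a : Fin m × Fin m, X a * u2 (a.1, φ a.2)) - (∑ a : Fin m × Fin m, X a * u2 a) ≤ ε) := by
  have hm' : (2:ℝ) ≤ (m:ℝ) := by exact_mod_cast hm
  have hm0 : (0:ℝ) < m := by linarith
  have hm1 : (0:ℝ) < (m:ℝ) - 1 := by linarith
  set q : Fin m → ℝ := fun k => ∑ a2 : Fin m, X (k, a2) with hq
  set D : ℝ := ∑ k : Fin m, X (k, k) with hD
  have hS0 : ∑ a : Fin m × Fin m, X a * u2 a = 1 - D := by
    have h1 : ∀ a : Fin m × Fin m, X a * u2 a = X a - (if a.1 = a.2 then X a else 0) := by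
      intro a; simp only [u2]; split <;> simp
    rw [Finset.sum_congr rfl (fun a _ => h1 a), Finset.sum_sub_distrib, hX1]
    congr 1
    rw [Fintype.sum_prod_type]
    simp [hD]
  have hS1 : ∀ j' : Fin m, ∑ a : Fin m × Fin m, X a * u2 (a.1, j') = 1 - q j' := by
    intro j'
    have h1 : ∀ a : Fin m × Fin m, X a * u2 (a.1, j') = X a - (if a.1 = j' then X a else 0) := by
      intro a; simp only [u2]; split <;> simp
    rw [Finset.sum_congr rfl (fun a _ => h1 a), Finset.sum_sub_distrib, hX1]
    congr 1
    rw [Fintype.sum_prod_type]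
    have h2 : ∀ x : Fin m, (∑ x1 : Fin m, if x = j' then X (x, x1) else 0)
        = if x = j' then q x else 0 := by
      intro x; split <;> simp [hq]
    rw [Finset.sum_congr rfl (fun x _ => h2 x), Finset.sum_ite_eq' Finset.univ j' q]
    simp
  have hqj : X (j, j) ≤ q j :=
    Finset.single_le_sum (f := fun a2 => X (j, a2)) (fun i _ => hX0 _) (Finset.mem_univ j)
  have hDj : X (j, j) ≤ D :=
    Finset.single_le_sum (f := fun k => X (k, k)) (fun i _ => hX0 _) (Finset.mem_univ j)
  have hqsum : ∑ k : Fin m, q k = 1 := by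
    rw [← hX1, Fintype.sum_prod_type]
  have hrest : ∑ k ∈ Finset.univ.erase j, q k = 1 - q j := by
    have h2 := Finset.sum_erase_add Finset.univ q (Finset.mem_univ j)
    rw [hqsum] at h2; linarith
  set c : ℝ := (1 - ρ) / ((m:ℝ) - 1) with hc
  have hcard : ((Finset.univ.erase j).card : ℝ) = (m:ℝ) - 1 := by
    rw [Finset.card_erase_of_mem (Finset.mem_univ j)]
    simp [Fintype.card_fin]
    push_cast [Nat.cast_sub (by omega : 1 ≤ m)]
    ring
  have hlt : ∑ k ∈ Finset.univ.erase j, q k < ∑ _k ∈ Finset.univ.erase j, c := by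
    rw [hrest, Finset.sum_const, nsmul_eq_mul, hcard]
    rw [hc]
    rw [mul_div_cancel₀ _ (ne_of_gt hm1)]
    linarith
  obtain ⟨j', hj'mem, hj'lt⟩ := Finset.exists_lt_of_sum_lt hlt
  have hkey : ρ - c ≥ ε := by
    have heq : ρ - c - ε = (((m:ℝ)-2)*(α*(m:ℝ)+1))/(2*(m:ℝ)*((m:ℝ)-1)) := by
      rw [hε, hρ, hc, hρ]; field_simp; ring
    have hpos : 0 ≤ (((m:ℝ)-2)*(α*(m:ℝ)+1))/(2*(m:ℝ)*((m:ℝ)-1)) := by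
      apply div_nonneg
      · apply mul_nonneg (by linarith) (by nlinarith)
      · nlinarith
    linarith [heq ▸ hpos]
  have hmain : (∑ a : Fin m × Fin m, X a * u2 (a.1, j')) -
      (∑ a : Fin m × Fin m, X a * u2 a) > ε := by
    rw [hS1, hS0]
    have : D - q j' > ρ - c := by
      have : ρ < D := lt_of_lt_of_le hj hDj
      linarith
    linarith
  refine ⟨⟨j', hmain⟩, fun h => ?_⟩
  have := h (fun _ => j')
  linarith
end
end
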